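/- Let p > 1, h continuous on [0,∞) with 0 ≤ h(s) ≤ M, and let w ∈ C²[0,c] satisfy w'' + h(s)w^p = 0 on (0,c), w(0) = w(c) = 0, w > 0 on (0,c). Then (w'(0))^{(p+3)/(p+1)} ≤ 2 M^{1/(p+1)} (∫_0^c |w'(s)|² ds)^{1/(p+1)} (∫_0^c h(s) w(s)^{p+1} ds)^{p/(p+1)}. -/

import Mathlib

open Real Filter Set

theorem stmt_3 (p : ℝ) (hp : 1 < p) (M : ℝ) (hM : 0 < M) (h : ℝ → ℝ)
    (hcont : ContinuousOn h (Set.Ici 0))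
    (hbd : ∀ s : ℝ, 0 ≤ s → 0 ≤ h s ∧ h s ≤ M)
    (c : ℝ) (hc : 0 < c) (w : ℝ → ℝ) (hw : ContDiff ℝ 2 w)
    (heq : ∀ s ∈ Set.Ioo (0:ℝ) c, deriv (deriv w) s + h s * (w s) ^ p = 0)
    (hw0 : w 0 = 0) (hwc : w c = 0)
    (hwpos : ∀ s ∈ Set.Ioo (0:ℝ) c, 0 < w s) :
    (deriv w 0) ^ ((p + 3) / (p + 1)) ≤
      2 * M ^ (1 / (p + 1)) * (∫ s in (0:ℝ)..c, (deriv w s) ^ 2) ^ (1 / (p + 1)) *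
        (∫ s in (0:ℝ)..c, h s * (w s) ^ (p + 1)) ^ (p / (p + 1)) := by
  classical
  have hp0 : (0:ℝ) < p := by linarith
  have hp1 : (0:ℝ) < p + 1 := by linarith
  have hpne : p ≠ 0 := ne_of_gt hp0
  have hp1ne : p + 1 ≠ 0 := ne_of_gt hp1
  set φ := deriv w with hφdef
  have hφ : ContDiff ℝ 1 φ := by
    have h2 : ContDiff ℝ (1 + 1) w := by
      convert hw using 2
      norm_num
    exact (contDiff_succ_iff_deriv.mp h2).2.2
  have hφc : Continuous φ := hφ.continuous
  have hφd : Differentiable ℝ φ := hφ.differentiable one_ne_zero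
  have hφ'c : Continuous (deriv φ) := hφ.continuous_deriv le_rfl
  have hwcont : Continuous w := hw.continuous
  -- w nonneg on Icc 0 c
  have hwnn : ∀ s ∈ Icc (0:ℝ) c, 0 ≤ w s := by
    intro s hs
    rcases eq_or_lt_of_le hs.1 with h0 | h0
    · rw [← h0, hw0]
    · rcases eq_or_lt_of_le hs.2 with h1 | h1
      · rw [h1, hwc]
      · exact (hwpos s ⟨h0, h1⟩).le
  -- φ is antitone on [0, c]
  have hanti : AntitoneOn φ (Icc 0 c) := by
    apply antitoneOn_of_deriv_nonpos (convex_Icc 0 c) hφc.continuousOn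
      (hφd.differentiableOn)
    intro x hx
    rw [interior_Icc] at hx
    have hd : deriv φ x = -(h x * w x ^ p) := by
      have := heq x hx; rw [hφdef]; linarith
    rw [hd, neg_nonpos]
    exact mul_nonneg (hbd x hx.1.le).1 (Real.rpow_nonneg (hwpos x hx).le p)
  obtain ⟨m, hm, hφm⟩ := exists_deriv_eq_zero hc hwcont.continuousOn (hw0.trans hwc.symm)
  rw [← hφdef] at hφm
  have h0mem : (0:ℝ) ∈ Icc (0:ℝ) c := ⟨le_rfl, hc.le⟩
  have hmmem : m ∈ Icc (0:ℝ) c := ⟨hm.1.le, hm.2.le⟩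
  set D := φ 0 with hDdef
  have hD0 : 0 ≤ D := by
    have := hanti h0mem hmmem hm.1.le
    rw [hφm] at this; exact this
  have hφrange : ∀ s ∈ Icc (0:ℝ) m, 0 ≤ φ s ∧ φ s ≤ D := by
    intro s hs
    have hsmem : s ∈ Icc (0:ℝ) c := ⟨hs.1, hs.2.trans hm.2.le⟩
    constructor
    · have := hanti hsmem hmmem hs.2
      rw [hφm] at this; exact this
    · exact hanti h0mem hsmem hs.1
  -- FTC : energy identity
  have hFTC : ∫ s in (0:ℝ)..m, (2 * φ s * deriv φ s) = (φ m) ^ 2 - (φ 0) ^ 2 := by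
    have := intervalIntegral.integral_eq_sub_of_hasDerivAt
      (f := fun s => φ s ^ 2) (f' := fun s => 2 * φ s * deriv φ s) (a := (0:ℝ)) (b := m)
      (fun x _ => by simpa using ((hφd x).hasDerivAt).fun_pow 2)
      (((continuous_const.mul hφc).mul hφ'c).intervalIntegrable 0 m)
    simpa using this
  have hIoo : ∫ s in Ioo (0:ℝ) m, (2 * φ s * deriv φ s) = -(D ^ 2) := by
    rw [← MeasureTheory.integral_Ioc_eq_integral_Ioo,
      ← intervalIntegral.integral_of_le hm.1.le, hFTC, hφm, ← hDdef]
    ring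
  have key : D ^ 2 = 2 * ∫ s in Ioo (0:ℝ) m, φ s * (h s * w s ^ p) := by
    have hcongr : EqOn (fun s => 2 * φ s * deriv φ s)
        (fun s => -(2 * (φ s * (h s * w s ^ p)))) (Ioo (0:ℝ) m) := by
      intro s hs
      have hs' : s ∈ Ioo (0:ℝ) c := ⟨hs.1, hs.2.trans hm.2⟩
      have hd : deriv φ s = -(h s * w s ^ p) := by
        have := heq s hs'; rw [hφdef]; linarith
      simp only [hd]; ring
    rw [MeasureTheory.setIntegral_congr_fun measurableSet_Ioo hcongr,
      MeasureTheory.integral_neg, MeasureTheory.integral_const_mul] at hIoo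
    linarith
  -- continuity of rpow with nonneg exponent
  have hcontpow : ∀ e : ℝ, 0 ≤ e → Continuous fun x : ℝ => x ^ e := fun e he =>
    continuous_iff_continuousAt.2 fun x => Real.continuousAt_rpow_const x e (Or.inr he)
  -- set-up for Hölder's inequality
  set μ := MeasureTheory.volume.restrict (Ioo (0:ℝ) m) with hμdef
  haveI : MeasureTheory.IsFiniteMeasure μ := by
    constructor
    rw [hμdef, MeasureTheory.Measure.restrict_apply_univ]
    exact measure_Ioo_lt_top
  obtain ⟨Cw, hCw⟩ :=
    (isCompact_Icc : IsCompact (Icc (0:ℝ) c)).exists_bound_of_continuousOn hwcont.continuousOn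
  have hCw0 : 0 ≤ Cw := le_trans (norm_nonneg _) (hCw 0 h0mem)
  set f : ℝ → ℝ := fun s => φ s ^ (2 / (p+1)) with hfdef
  set g : ℝ → ℝ := fun s => h s * w s ^ p with hgdef
  have hIoosub : Ioo (0:ℝ) m ⊆ Icc 0 m := Ioo_subset_Icc_self
  have hIooIcc : Ioo (0:ℝ) m ⊆ Icc 0 c := fun x hx => ⟨hx.1.le, hx.2.le.trans hm.2.le⟩
  have hIooIci : Ioo (0:ℝ) m ⊆ Ici 0 := fun x hx => hx.1.le
  -- pointwise bounds
  have hfbd : ∀ x ∈ Ioo (0:ℝ) m, 0 ≤ f x ∧ f x ≤ D ^ (2/(p+1)) := by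
    intro x hx
    obtain ⟨h1, h2⟩ := hφrange x (hIoosub hx)
    exact ⟨Real.rpow_nonneg h1 _, Real.rpow_le_rpow h1 h2 (by positivity)⟩
  have hgbd : ∀ x ∈ Ioo (0:ℝ) m, 0 ≤ g x ∧ g x ≤ M * Cw ^ p := by
    intro x hx
    have hx0 : 0 ≤ x := hx.1.le
    have hwx : 0 ≤ w x := hwnn x (hIooIcc hx)
    have hwxC : w x ≤ Cw := le_trans (le_abs_self _) (hCw x (hIooIcc hx))
    refine ⟨mul_nonneg (hbd x hx0).1 (Real.rpow_nonneg hwx _), ?_⟩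
    exact mul_le_mul (hbd x hx0).2 (Real.rpow_le_rpow hwx hwxC hp0.le)
      (Real.rpow_nonneg hwx _) hM.le
  -- measurability
  have hfcont : Continuous f := (hcontpow (2/(p+1)) (by positivity)).comp hφc
  have hgcont : ContinuousOn g (Ioo (0:ℝ) m) :=
    (hcont.mono hIooIci).mul ((hcontpow p hp0.le).comp hwcont).continuousOn
  have hfm : MeasureTheory.AEStronglyMeasurable f μ := hfcont.aestronglyMeasurable
  have hgm : MeasureTheory.AEStronglyMeasurable g μ :=
    hgcont.aestronglyMeasurable measurableSet_Ioo
  -- integrability of bounded a.e.-measurable functions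
  have intbdd : ∀ (F : ℝ → ℝ) (C : ℝ), MeasureTheory.AEStronglyMeasurable F μ →
      (∀ x ∈ Ioo (0:ℝ) m, ‖F x‖ ≤ C) → MeasureTheory.Integrable F μ := by
    intro F C hFm hFC
    refine (MeasureTheory.integrable_const C).mono' hFm ?_
    rw [hμdef]
    exact (MeasureTheory.ae_restrict_iff' measurableSet_Ioo).2 (MeasureTheory.ae_of_all _ hFC)
  have hf0 : (0:ℝ → ℝ) ≤ᵐ[μ] f := by
    rw [hμdef]
    exact (MeasureTheory.ae_restrict_iff' measurableSet_Ioo).2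
      (MeasureTheory.ae_of_all _ fun x hx => (hfbd x hx).1)
  have hg0 : (0:ℝ → ℝ) ≤ᵐ[μ] g := by
    rw [hμdef]
    exact (MeasureTheory.ae_restrict_iff' measurableSet_Ioo).2
      (MeasureTheory.ae_of_all _ fun x hx => (hgbd x hx).1)
  have hfmem : MeasureTheory.MemLp f (ENNReal.ofReal (p+1)) μ :=
    MeasureTheory.MemLp.of_bound hfm (D ^ (2/(p+1))) (by
      rw [hμdef]
      exact (MeasureTheory.ae_restrict_iff' measurableSet_Ioo).2
        (MeasureTheory.ae_of_all _ fun x hx => by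
          rw [Real.norm_of_nonneg (hfbd x hx).1]; exact (hfbd x hx).2))
  have hgmem : MeasureTheory.MemLp g (ENNReal.ofReal ((p+1)/p)) μ :=
    MeasureTheory.MemLp.of_bound hgm (M * Cw ^ p) (by
      rw [hμdef]
      exact (MeasureTheory.ae_restrict_iff' measurableSet_Ioo).2
        (MeasureTheory.ae_of_all _ fun x hx => by
          rw [Real.norm_of_nonneg (hgbd x hx).1]; exact (hgbd x hx).2))
  have hpq : (p+1).HolderConjugate ((p+1)/p) := by
    rw [Real.holderConjugate_iff]; constructor
    · linarith
    · rw [inv_div]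
      field_simp
      ring
  have holder := MeasureTheory.integral_mul_le_Lp_mul_Lq_of_nonneg hpq hf0 hg0 hfmem hgmem
  rw [one_div_div] at holder
  set Am := ∫ s in Ioo (0:ℝ) m, φ s ^ 2 with hAmdef
  set Bm := ∫ s in Ioo (0:ℝ) m, h s * w s ^ (p+1) with hBmdef
  have hAm0 : 0 ≤ Am :=
    MeasureTheory.setIntegral_nonneg measurableSet_Ioo fun x _ => sq_nonneg _
  have hBm0 : 0 ≤ Bm :=
    MeasureTheory.setIntegral_nonneg measurableSet_Ioo fun x hx =>
      mul_nonneg (hbd x hx.1.le).1 (Real.rpow_nonneg (hwnn x (hIooIcc hx)) _)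
  -- identify ∫ f^(p+1)
  have e1 : (∫ a, f a ^ (p+1) ∂μ) = Am := by
    rw [hμdef, hAmdef]
    apply MeasureTheory.setIntegral_congr_fun measurableSet_Ioo
    intro x hx
    have h1 : 0 ≤ φ x := (hφrange x (hIoosub hx)).1
    simp only [hfdef]
    rw [← Real.rpow_natCast (φ x) 2, ← Real.rpow_mul h1, div_mul_cancel₀ _ hp1ne]
    norm_num
  -- bound ∫ g^((p+1)/p)
  have hint1 : MeasureTheory.Integrable (fun a => g a ^ ((p+1)/p)) μ := by
    refine intbdd _ ((M * Cw ^ p) ^ ((p+1)/p))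
      (((hcontpow ((p+1)/p) (by positivity)).comp_continuousOn hgcont).aestronglyMeasurable
        measurableSet_Ioo) (fun x hx => ?_)
    rw [Real.norm_of_nonneg (Real.rpow_nonneg (hgbd x hx).1 _)]
    exact Real.rpow_le_rpow (hgbd x hx).1 (hgbd x hx).2 (by positivity)
  have hint2 : MeasureTheory.Integrable (fun s => M ^ (1/p) * (h s * w s ^ (p+1))) μ := by
    refine intbdd _ (M ^ (1/p) * (M * Cw ^ (p+1)))
      ((((hcont.mono hIooIci).mul
        ((hcontpow (p+1) hp1.le).comp hwcont).continuousOn).aestronglyMeasurable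
          measurableSet_Ioo).const_mul _) (fun x hx => ?_)
    have hx0 : 0 ≤ x := hx.1.le
    have hwx : 0 ≤ w x := hwnn x (hIooIcc hx)
    have hwxC : w x ≤ Cw := le_trans (le_abs_self _) (hCw x (hIooIcc hx))
    rw [Real.norm_of_nonneg (mul_nonneg (Real.rpow_nonneg hM.le _)
      (mul_nonneg (hbd x hx0).1 (Real.rpow_nonneg hwx _)))]
    refine mul_le_mul_of_nonneg_left ?_ (Real.rpow_nonneg hM.le _)
    exact mul_le_mul (hbd x hx0).2 (Real.rpow_le_rpow hwx hwxC hp1.le)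
      (Real.rpow_nonneg hwx _) hM.le
  have e2 : (∫ a, g a ^ ((p+1)/p) ∂μ) ≤ M ^ (1/p) * Bm := by
    rw [hBmdef, ← MeasureTheory.integral_const_mul, hμdef]
    apply MeasureTheory.setIntegral_mono_on hint1 hint2 measurableSet_Ioo
    intro x hx
    have hx0 : 0 ≤ x := hx.1.le
    have hh0 : 0 ≤ h x := (hbd x hx0).1
    have hwx : 0 ≤ w x := hwnn x (hIooIcc hx)
    simp only [hgdef]
    rw [Real.mul_rpow hh0 (Real.rpow_nonneg hwx _), ← Real.rpow_mul hwx,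
      mul_div_cancel₀ _ hpne]
    have hstep : h x ^ ((p+1)/p) ≤ h x * M ^ (1/p) := by
      have e : (p+1)/p = 1 + 1/p := by field_simp
      rw [e, Real.rpow_add' hh0 (by positivity), Real.rpow_one]
      exact mul_le_mul_of_nonneg_left
        (Real.rpow_le_rpow hh0 (hbd x hx0).2 (by positivity)) hh0
    calc h x ^ ((p+1)/p) * w x ^ (p+1) ≤ (h x * M ^ (1/p)) * w x ^ (p+1) :=
          mul_le_mul_of_nonneg_right hstep (Real.rpow_nonneg hwx _)
      _ = M ^ (1/p) * (h x * w x ^ (p+1)) := by ring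
  have hgq0 : 0 ≤ ∫ a, g a ^ ((p+1)/p) ∂μ := by
    rw [hμdef]
    exact MeasureTheory.setIntegral_nonneg measurableSet_Ioo fun x hx =>
      Real.rpow_nonneg (hgbd x hx).1 _
  -- pointwise Hölder preparation step
  have hintL : MeasureTheory.Integrable (fun s => φ s * (h s * w s ^ p)) μ := by
    refine intbdd _ (D * (M * Cw ^ p))
      ((hφc.continuousOn.mul hgcont).aestronglyMeasurable measurableSet_Ioo) (fun x hx => ?_)
    obtain ⟨h1, h2⟩ := hφrange x (hIoosub hx)
    obtain ⟨h3, h4⟩ := hgbd x hx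
    rw [Real.norm_of_nonneg (mul_nonneg h1 h3)]
    exact mul_le_mul h2 h4 h3 hD0
  have hintR : MeasureTheory.Integrable (fun s => D ^ ((p-1)/(p+1)) * (f s * g s)) μ := by
    refine intbdd _ (D ^ ((p-1)/(p+1)) * (D ^ (2/(p+1)) * (M * Cw ^ p)))
      (((hfcont.continuousOn.mul hgcont).aestronglyMeasurable measurableSet_Ioo).const_mul _)
      (fun x hx => ?_)
    obtain ⟨h1, h2⟩ := hfbd x hx
    obtain ⟨h3, h4⟩ := hgbd x hx
    rw [Real.norm_of_nonneg (mul_nonneg (Real.rpow_nonneg hD0 _) (mul_nonneg h1 h3))]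
    exact mul_le_mul_of_nonneg_left (mul_le_mul h2 h4 h3 (Real.rpow_nonneg hD0 _))
      (Real.rpow_nonneg hD0 _)
  have step1 : (∫ s in Ioo (0:ℝ) m, φ s * (h s * w s ^ p)) ≤
      D ^ ((p-1)/(p+1)) * ∫ a, f a * g a ∂μ := by
    rw [← MeasureTheory.integral_const_mul]
    conv_lhs => rw [← hμdef]
    apply MeasureTheory.setIntegral_mono_on hintL hintR measurableSet_Ioo
    intro x hx
    obtain ⟨hφ0, hφD⟩ := hφrange x (hIoosub hx)
    have hgx0 : 0 ≤ h x * w x ^ p := (hgbd x hx).1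
    have hsum : 2/(p+1) + (p-1)/(p+1) = 1 := by field_simp; ring
    have hsplit : φ x = φ x ^ (2/(p+1)) * φ x ^ ((p-1)/(p+1)) := by
      rw [← Real.rpow_add' hφ0 (by rw [hsum]; norm_num), hsum, Real.rpow_one]
    calc φ x * (h x * w x ^ p)
        = φ x ^ (2/(p+1)) * φ x ^ ((p-1)/(p+1)) * (h x * w x ^ p) := by rw [← hsplit]
      _ ≤ φ x ^ (2/(p+1)) * D ^ ((p-1)/(p+1)) * (h x * w x ^ p) := by
          exact mul_le_mul_of_nonneg_right (mul_le_mul_of_nonneg_left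
            (Real.rpow_le_rpow hφ0 hφD (div_nonneg (by linarith) (by linarith)))
            (Real.rpow_nonneg hφ0 _)) hgx0
      _ = D ^ ((p-1)/(p+1)) * (f x * g x) := by simp only [hfdef, hgdef]; ring
  -- combine Hölder with the identifications
  have hMsplit : (M ^ (1/p) * Bm) ^ (p/(p+1)) = M ^ (1/(p+1)) * Bm ^ (p/(p+1)) := by
    rw [Real.mul_rpow (Real.rpow_nonneg hM.le _) hBm0, ← Real.rpow_mul hM.le]
    congr 2
    field_simp
  have holder2 : (∫ a, f a * g a ∂μ) ≤
      Am ^ (1/(p+1)) * (M ^ (1/(p+1)) * Bm ^ (p/(p+1))) := by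
    rw [e1] at holder
    refine holder.trans ?_
    rw [← hMsplit]
    exact mul_le_mul_of_nonneg_left
      (Real.rpow_le_rpow hgq0 e2 (by positivity)) (Real.rpow_nonneg hAm0 _)
  have main : D ^ 2 ≤ 2 * D ^ ((p-1)/(p+1)) *
      (M ^ (1/(p+1)) * Am ^ (1/(p+1)) * Bm ^ (p/(p+1))) := by
    have hDe : 0 ≤ D ^ ((p-1)/(p+1)) := Real.rpow_nonneg hD0 _
    have h1 : (∫ s in Ioo (0:ℝ) m, φ s * (h s * w s ^ p)) ≤
        D ^ ((p-1)/(p+1)) * (Am ^ (1/(p+1)) * (M ^ (1/(p+1)) * Bm ^ (p/(p+1)))) :=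
      step1.trans (mul_le_mul_of_nonneg_left holder2 hDe)
    calc D ^ 2 = 2 * ∫ s in Ioo (0:ℝ) m, φ s * (h s * w s ^ p) := key
      _ ≤ 2 * (D ^ ((p-1)/(p+1)) * (Am ^ (1/(p+1)) * (M ^ (1/(p+1)) * Bm ^ (p/(p+1))))) := by
          linarith
      _ = 2 * D ^ ((p-1)/(p+1)) * (M ^ (1/(p+1)) * Am ^ (1/(p+1)) * Bm ^ (p/(p+1))) := by
          ring
  -- enlarge the integration interval
  have hA : Am ≤ ∫ s in (0:ℝ)..c, φ s ^ 2 := by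
    rw [hAmdef, ← MeasureTheory.integral_Ioc_eq_integral_Ioo,
      ← intervalIntegral.integral_of_le hm.1.le]
    exact intervalIntegral.integral_mono_interval le_rfl hm.1.le hm.2.le
      (MeasureTheory.ae_of_all _ fun x => sq_nonneg _) ((hφc.pow 2).intervalIntegrable 0 c)
  have hBint : IntervalIntegrable (fun s => h s * w s ^ (p+1)) MeasureTheory.volume 0 c := by
    apply ContinuousOn.intervalIntegrable
    rw [uIcc_of_le hc.le]
    exact (hcont.mono (fun x hx => hx.1)).mul
      ((hcontpow (p+1) hp1.le).comp hwcont).continuousOn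
  have hB : Bm ≤ ∫ s in (0:ℝ)..c, h s * w s ^ (p+1) := by
    rw [hBmdef, ← MeasureTheory.integral_Ioc_eq_integral_Ioo,
      ← intervalIntegral.integral_of_le hm.1.le]
    refine intervalIntegral.integral_mono_interval le_rfl hm.1.le hm.2.le ?_ hBint
    refine (MeasureTheory.ae_restrict_iff' measurableSet_Ioc).2
      (MeasureTheory.ae_of_all _ fun x hx => ?_)
    exact mul_nonneg (hbd x hx.1.le).1 (Real.rpow_nonneg (hwnn x ⟨hx.1.le, hx.2⟩) _)
  set A := ∫ s in (0:ℝ)..c, φ s ^ 2 with hAdef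
  set B := ∫ s in (0:ℝ)..c, h s * w s ^ (p+1) with hBdef
  have hA0 : 0 ≤ A := hAm0.trans hA
  have hB0 : 0 ≤ B := hBm0.trans hB
  have hMe : 0 ≤ M ^ (1/(p+1)) := Real.rpow_nonneg hM.le _
  have main2 : D ^ 2 ≤ 2 * D ^ ((p-1)/(p+1)) *
      (M ^ (1/(p+1)) * A ^ (1/(p+1)) * B ^ (p/(p+1))) := by
    refine main.trans ?_
    have h1 : Am ^ (1/(p+1)) ≤ A ^ (1/(p+1)) := Real.rpow_le_rpow hAm0 hA (by positivity)
    have h2 : Bm ^ (p/(p+1)) ≤ B ^ (p/(p+1)) := Real.rpow_le_rpow hBm0 hB (by positivity)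
    have hDe : 0 ≤ D ^ ((p-1)/(p+1)) := Real.rpow_nonneg hD0 _
    refine mul_le_mul_of_nonneg_left ?_ (mul_nonneg (by norm_num) hDe)
    exact mul_le_mul (mul_le_mul_of_nonneg_left h1 hMe) h2
      (Real.rpow_nonneg hBm0 _) (mul_nonneg hMe (Real.rpow_nonneg hA0 _))
  -- conclusion
  rcases eq_or_lt_of_le hD0 with hDeq | hDpos
  · rw [← hDeq, Real.zero_rpow (ne_of_gt (by positivity))]
    exact mul_nonneg (mul_nonneg (mul_nonneg (by norm_num) hMe)
      (Real.rpow_nonneg hA0 _)) (Real.rpow_nonneg hB0 _)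
  · have hDe : (0:ℝ) < D ^ ((p-1)/(p+1)) := Real.rpow_pos_of_pos hDpos _
    have hsub : (p+3)/(p+1) = 2 - (p-1)/(p+1) := by field_simp; ring
    rw [hsub, Real.rpow_sub hDpos, Real.rpow_two, div_le_iff₀ hDe]
    calc D ^ 2 ≤ 2 * D ^ ((p-1)/(p+1)) *
          (M ^ (1/(p+1)) * A ^ (1/(p+1)) * B ^ (p/(p+1))) := main2
      _ = 2 * M ^ (1/(p+1)) * A ^ (1/(p+1)) * B ^ (p/(p+1)) * D ^ ((p-1)/(p+1)) := by ring
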